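/- Let A be a uniform algebra on a compact Hausdorff space X with X equal to the character space of A. Then A is regular (for every closed set E ⊆ X and every x ∈ X \ E there exists f ∈ A with f(x) = 1 and f ≡ 0 on E) if and only if every point of X is a point of continuity for A (i.e., for all distinct x, y ∈ X, J_y is not contained in M_x). -/
import Mathlib


/-- For a uniform algebra `A` on a compact Hausdorff space `X` equal to the
character space of `A`, regularity of `A` is equivalent to every point of `X`
being a point of continuity for `A`. -/
theorem regular_iff_every_point_of_continuity
    {X : Type*} [TopologicalSpace X] [CompactSpace X] [T2Space X]
    (A : Subalgebra ℂ C(X, ℂ))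
    (hclosed : IsClosed (A : Set C(X, ℂ)))
    (hsep : ∀ x y : X, x ≠ y → ∃ f ∈ A, f x ≠ f y)
    (hchar : ∀ φ : A →ₐ[ℂ] ℂ, ∃ x : X, ∀ f : A, φ f = (f : C(X, ℂ)) x) :
    (∀ E : Set X, IsClosed E → ∀ x ∉ E, ∃ f ∈ A, f x = 1 ∧ ∀ z ∈ E, f z = 0) ↔
    (∀ x y : X, x ≠ y → ∃ f ∈ A, (∃ U ∈ nhds y, ∀ z ∈ U, f z = 0) ∧ f x ≠ 0) := by
  constructor
  · intro hreg x y hxy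
    obtain ⟨U, V, hU, hV, hxU, hyV, hUV⟩ := t2_separation hxy
    have hxcl : x ∉ closure V := by
      intro hx
      obtain ⟨z, hzU, hzV⟩ := mem_closure_iff.mp hx U hU hxU
      exact Set.disjoint_left.mp hUV hzU hzV
    obtain ⟨f, hfA, hfx, hfE⟩ := hreg (closure V) isClosed_closure x hxcl
    exact ⟨f, hfA, ⟨V, hV.mem_nhds hyV, fun z hz => hfE z (subset_closure hz)⟩,
      by rw [hfx]; exact one_ne_zero⟩
  · intro h E hE x hx
    have key : ∀ y ∈ E, ∃ f ∈ A, ∃ U ∈ nhds y, (∀ z ∈ U, f z = 0) ∧ f x ≠ 0 := by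
      intro y hy
      obtain ⟨f, hfA, ⟨U, hU, hfU⟩, hfx⟩ := h x y (fun e => hx (e ▸ hy))
      exact ⟨f, hfA, U, hU, hfU, hfx⟩
    choose! f hfA U hU hfU hfx using key
    obtain ⟨t, ht, hcover⟩ := (hE.isCompact).elim_nhds_subcover U (fun y hy => hU y hy)
    set g : C(X, ℂ) := ∏ y ∈ t, f y with hg
    have hgA : g ∈ A := A.prod_mem fun y hy => hfA y (ht y hy)
    have hgx : g x ≠ 0 := by
      have : g x = ∏ y ∈ t, f y x := by
        simp [hg]
      rw [this]
      exact Finset.prod_ne_zero_iff.mpr fun y hy => hfx y (ht y hy)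
    refine ⟨(g x)⁻¹ • g, A.smul_mem hgA _, ?_, ?_⟩
    · simp [inv_mul_cancel₀ hgx]
    · intro z hz
      obtain ⟨y, hyt, hzU⟩ := Set.mem_iUnion₂.mp (hcover hz)
      have hgz : g z = 0 := by
        have : g z = ∏ y ∈ t, f y z := by simp [hg]
        rw [this]
        exact Finset.prod_eq_zero hyt (hfU y (ht y hyt) z hzU)
      simp [hgz]
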